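/- Let A be a unital C*-algebra, G a compact Hausdorff topological group, and α : G → Aut(A) an action of G on A by *-automorphisms such that for every a ∈ A the map g ↦ α_g(a) is norm-continuous. Let H be a complex Hilbert space, π : A → B(H) a unital *-homomorphism, and U a strongly continuous unitary representation of G on H satisfying the covariance condition U_g π(a) U_g* = π(α_g(a)) for all a ∈ A and g ∈ G. If the restriction of π to the fixed-point subalgebra A^G = {a ∈ A : α_g(a) = a for all g ∈ G} is injective, then π is injective. -/

import Mathlib

open MeasureTheory Filter Topology

/-- Auxiliary: in a star-ordered ring which is a star module over `ℝ`,
scalar multiplication by a nonnegative real preserves nonnegativity. -/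
private lemma aux_smul_nonneg {A : Type*} [NonUnitalRing A] [StarRing A] [PartialOrder A]
    [StarOrderedRing A] [Module ℝ A] [StarModule ℝ A] [IsScalarTower ℝ A A]
    [SMulCommClass ℝ A A] {c : ℝ} {x : A} (hc : 0 ≤ c) (hx : 0 ≤ x) : 0 ≤ c • x := by
  rw [StarOrderedRing.nonneg_iff] at hx ⊢
  refine AddSubmonoid.closure_induction ?mem ?zero ?add hx
  case mem =>
    rintro y ⟨z, rfl⟩
    refine AddSubmonoid.subset_closure ⟨Real.sqrt c • z, ?_⟩
    show star (Real.sqrt c • z) * (Real.sqrt c • z) = c • (star z * z)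
    rw [star_smul, star_trivial, smul_mul_smul_comm, Real.mul_self_sqrt hc]
  case zero => simpa using zero_mem _
  case add => intro u v _ _ hu hv; simpa [smul_add] using add_mem hu hv

/-- Let `A` be a unital C*-algebra, `G` a compact Hausdorff topological
group, and `α` a strongly continuous action of `G` on `A` by *-automorphisms. Let `H` be a
complex Hilbert space, `π : A → B(H)` a unital *-homomorphism and `U` a strongly
continuous unitary representation of `G` on `H` satisfying the covariance condition
`U g * π a * (U g)* = π (α g a)`. If the restriction of `π` to the fixed-point subalgebra
`A^G` is injective, then `π` is injective. -/
theorem covariant_representation_faithful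
    {G : Type*} [Group G] [TopologicalSpace G] [IsTopologicalGroup G]
    [CompactSpace G] [T2Space G]
    {A : Type*} [NormedRing A] [StarRing A] [CStarRing A] [NormedAlgebra ℂ A]
    [StarModule ℂ A] [CompleteSpace A]
    (α : G → (A ≃⋆ₐ[ℂ] A))
    (h_one : ∀ a : A, α 1 a = a)
    (h_mul : ∀ g h : G, ∀ a : A, α (g * h) a = α g (α h a))
    (h_cont : ∀ a : A, Continuous (fun g : G => α g a))
    {H : Type*} [NormedAddCommGroup H] [InnerProductSpace ℂ H] [CompleteSpace H]
    (π : A →⋆ₐ[ℂ] (H →L[ℂ] H))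
    (U : G → (H →L[ℂ] H))
    (hU_unitary : ∀ g : G, U g ∈ unitary (H →L[ℂ] H))
    (hU_one : U 1 = 1)
    (hU_mul : ∀ g h : G, U (g * h) = U g * U h)
    (hU_cont : ∀ w : H, Continuous (fun g : G => U g w))
    (h_cov : ∀ (g : G) (a : A), U g * π a * star (U g) = π (α g a))
    (h_inj : ∀ a b : A, (∀ g : G, α g a = a) → (∀ g : G, α g b = b) →
      π a = π b → a = b) :
    Function.Injective π := by
  letI : CStarAlgebra A :=
    { ‹NormedRing A›, ‹StarRing A›, ‹CStarRing A›, ‹NormedAlgebra ℂ A›, ‹StarModule ℂ A›,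
      ‹CompleteSpace A› with }
  letI : PartialOrder A := CStarAlgebra.spectralOrder A
  letI : StarOrderedRing A := CStarAlgebra.spectralOrderedRing A
  letI : MeasurableSpace G := borel G
  haveI : BorelSpace G := ⟨rfl⟩
  set μ : Measure G := Measure.haarMeasure ⊤ with hμdef
  haveI : IsProbabilityMeasure μ := ⟨by
    rw [← TopologicalSpace.PositiveCompacts.coe_top (α := G)]
    exact Measure.haarMeasure_self⟩
  have hintA : ∀ f : G → A, Continuous f → Integrable f μ :=
    fun f hf => hf.integrable_of_hasCompactSupport (HasCompactSupport.of_compactSpace f)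
  have hone_nonneg : (0 : A) ≤ 1 := by simpa using star_mul_self_nonneg (1 : A)
  have key : ∀ a : A, π a = 0 → a = 0 := by
    intro a ha
    set b := star a * a with hbdef
    have hπb : π b = 0 := by rw [hbdef, map_mul, map_star, ha]; simp
    have hb0 : (0 : A) ≤ b := star_mul_self_nonneg a
    set F : G → A := fun g => α g b with hFdef
    have hFcont : Continuous F := h_cont b
    have hFpos : ∀ g, (0 : A) ≤ F g := fun g => by
      simpa [hFdef, hbdef, map_mul, map_star] using star_mul_self_nonneg (α g a)
    have hπF : ∀ g, π (F g) = 0 := by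
      intro g
      rw [hFdef]
      dsimp only
      rw [← h_cov g b, hπb]
      simp
    -- the averaged element
    set Eb : A := ∫ g, F g ∂μ with hEdef
    have hEfix : ∀ g : G, α g Eb = Eb := by
      intro h0
      let Lh : A →ₗ[ℂ] A :=
        { toFun := ⇑(α h0)
          map_add' := fun x y => map_add (α h0) x y
          map_smul' := fun c x => map_smul (α h0) c x }
      let L : A →L[ℂ] A :=
        { toLinearMap := Lh
          cont := (StarAlgEquiv.isometry (α h0)).continuous }
      have h1 : α h0 Eb = ∫ g, α h0 (F g) ∂μ :=
        (ContinuousLinearMap.integral_comp_comm L (hintA F hFcont)).symm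
      have h2 : ∫ g, α h0 (F g) ∂μ = ∫ g, F (h0 * g) ∂μ := by
        congr 1 with g
        rw [hFdef]
        exact (h_mul h0 g b).symm
      rw [h1, h2, integral_mul_left_eq_self F h0]
    have hπEb : π Eb = 0 := by
      let Lp : A →L[ℂ] (H →L[ℂ] H) :=
        { toLinearMap :=
          { toFun := ⇑π
            map_add' := fun x y => map_add π x y
            map_smul' := fun c x => map_smul π c x }
          cont := AddMonoidHomClass.continuous_of_bound π 1
            (fun x => by simpa using NonUnitalStarAlgHom.norm_apply_le π x) }
      have h1 : π Eb = ∫ g, π (F g) ∂μ :=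
        (ContinuousLinearMap.integral_comp_comm Lp (hintA F hFcont)).symm
      rw [h1]
      simp [hπF]
    have hEb0 : Eb = 0 :=
      h_inj Eb 0 hEfix (fun g => map_zero (α g)) (by rw [hπEb, map_zero])
    -- faithfulness of averaging on nonnegative elements
    have hble : ∀ ε : ℝ, 0 < ε → b ≤ ε • 1 := by
      intro ε hε
      set k : G → ℝ := fun g => 1 - min 1 (‖F g - b‖ / ε) with hkdef
      have hkcont : Continuous k := by
        apply continuous_const.sub
        exact continuous_const.min ((hFcont.sub continuous_const).norm.div_const ε)
      have hk0 : ∀ g, 0 ≤ k g := fun g => sub_nonneg.mpr (min_le_left _ _)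
      have hk1 : ∀ g, k g ≤ 1 := fun g => by
        have : (0:ℝ) ≤ min 1 (‖F g - b‖ / ε) :=
          le_min zero_le_one (div_nonneg (norm_nonneg _) hε.le)
        simp only [hkdef]
        linarith
      have hkint : Integrable k μ :=
        hkcont.integrable_of_hasCompactSupport (HasCompactSupport.of_compactSpace k)
      set c : ℝ := ∫ g, k g ∂μ with hcdef
      have hcpos : 0 < c := by
        rw [hcdef, integral_pos_iff_support_of_nonneg hk0 hkint]
        have hsub : {g : G | ‖F g - b‖ < ε} ⊆ Function.support k := by
          intro g hg
          have h1 : ‖F g - b‖ / ε < 1 := (div_lt_one hε).mpr hg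
          have : min 1 (‖F g - b‖ / ε) < 1 := lt_of_le_of_lt (min_le_right _ _) h1
          simp only [Function.mem_support, hkdef]
          intro hk
          rw [sub_eq_zero] at hk
          rw [← hk] at this
          exact lt_irrefl _ this
        refine lt_of_lt_of_le ?_ (measure_mono hsub)
        refine IsOpen.measure_pos μ ?_ ⟨1, ?_⟩
        · exact isOpen_lt (hFcont.sub continuous_const).norm continuous_const
        · show ‖F 1 - b‖ < ε
          have : F 1 = b := h_one b
          simpa [this] using hε
      -- pointwise inequality
      have hpt : ∀ g, (0 : A) ≤ F g - (k g • b - (ε * k g) • (1 : A)) := by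
        intro g
        by_cases hg : ‖F g - b‖ < ε
        · have e1 : (0 : A) ≤ (1 - k g) • F g :=
            aux_smul_nonneg (sub_nonneg.mpr (hk1 g)) (hFpos g)
          have e2 : (0 : A) ≤ F g - b + ε • 1 := by
            have hsa : IsSelfAdjoint (b - F g) := by
              have h1 : IsSelfAdjoint b := IsSelfAdjoint.star_mul_self a
              have h2 : IsSelfAdjoint (F g) := by
                rw [hFdef]
                dsimp only
                rw [hbdef, map_mul, map_star]
                exact IsSelfAdjoint.star_mul_self (α g a)
              exact h1.sub h2
            have h3 : b - F g ≤ algebraMap ℝ A ‖b - F g‖ :=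
              IsSelfAdjoint.le_algebraMap_norm_self hsa
            have h4 : algebraMap ℝ A ‖b - F g‖ = ‖b - F g‖ • (1 : A) :=
              Algebra.algebraMap_eq_smul_one _
            have h5 : ‖b - F g‖ • (1 : A) ≤ ε • 1 := by
              have h6 : (0:A) ≤ (ε - ‖b - F g‖) • (1 : A) := by
                refine aux_smul_nonneg ?_ hone_nonneg
                rw [norm_sub_rev]
                linarith
              rw [sub_smul] at h6
              exact sub_nonneg.mp h6
            have h7 : b - F g ≤ ε • 1 := le_trans (h4 ▸ h3) h5
            have := sub_nonneg.mpr h7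
            calc (0:A) ≤ ε • 1 - (b - F g) := this
              _ = F g - b + ε • 1 := by abel
          have e3 : (0 : A) ≤ k g • (F g - b + ε • 1) := aux_smul_nonneg (hk0 g) e2
          have e4 := add_nonneg e1 e3
          have e5 : (1 - k g) • F g + k g • (F g - b + ε • 1)
              = F g - (k g • b - (ε * k g) • (1 : A)) := by
            rw [sub_smul, one_smul, smul_add, smul_sub, smul_smul, mul_comm (k g) ε]
            abel
          rwa [e5] at e4
        · have hkg0 : k g = 0 := by
            have h1 : (1:ℝ) ≤ ‖F g - b‖ / ε := (one_le_div hε).mpr (not_lt.mp hg)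
            simp [hkdef, min_eq_left h1]
          simpa [hkg0] using hFpos g
      -- integrate the pointwise inequality
      have hconv : Convex ℝ {x : A | 0 ≤ x} := by
        intro x hx y hy p q hp hq hpq
        exact add_nonneg (aux_smul_nonneg (A := A) hp hx) (aux_smul_nonneg (A := A) hq hy)
      have hI1 : Integrable (fun g => k g • b) μ := hkint.smul_const b
      have hI2 : Integrable (fun g => (ε * k g) • (1:A)) μ := (hkint.const_mul ε).smul_const 1
      have hI3 : Integrable (fun g => k g • b - (ε * k g) • (1:A)) μ := hI1.sub hI2
      have hint2 : Integrable (fun g => F g - (k g • b - (ε * k g) • (1:A))) μ :=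
        (hintA F hFcont).sub hI3
      have hmem : (0 : A) ≤ ∫ g, (F g - (k g • b - (ε * k g) • (1:A))) ∂μ :=
        hconv.integral_mem CStarAlgebra.isClosed_nonneg (ae_of_all _ hpt) hint2
      have hcalc : ∫ g, (F g - (k g • b - (ε * k g) • (1:A))) ∂μ
          = Eb - (c • b - (ε * c) • (1:A)) := by
        rw [integral_sub (hintA F hFcont) hI3, integral_sub hI1 hI2,
          integral_smul_const, integral_smul_const, integral_const_mul, hEdef, hcdef]
      rw [hcalc, hEb0, zero_sub, ← sub_nonneg] at hmem
      -- hmem : 0 ≤ -(c • b - (ε*c) • 1)  roughly; we derive b ≤ ε • 1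
      have hmem' : (0:A) ≤ (ε * c) • (1:A) - c • b := by
        have : (0:A) ≤ -(c • b - (ε * c) • (1:A)) := by simpa using hmem
        simpa [neg_sub] using this
      have h8 : (0:A) ≤ c⁻¹ • ((ε * c) • (1:A) - c • b) :=
        aux_smul_nonneg (inv_nonneg.mpr hcpos.le) hmem'
      have h9 : c⁻¹ • ((ε * c) • (1:A) - c • b) = ε • (1:A) - b := by
        have hc' : c⁻¹ * (ε * c) = ε := by field_simp
        rw [smul_sub, smul_smul, smul_smul, inv_mul_cancel₀ hcpos.ne', one_smul, hc']
      rw [h9] at h8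
      exact sub_nonneg.mp h8
    -- take the limit ε → 0
    have hb_le0 : b ≤ 0 := by
      have htend : Tendsto (fun n : ℕ => ((n : ℝ) + 1)⁻¹ • (1:A) - b) atTop (𝓝 (0 - b)) := by
        have h1 : Tendsto (fun n : ℕ => ((n : ℝ) + 1)⁻¹) atTop (𝓝 0) :=
          tendsto_one_div_add_atTop_nhds_zero_nat.congr (fun n => by rw [one_div])
        have h2 : Tendsto (fun n : ℕ => ((n : ℝ) + 1)⁻¹ • (1:A)) atTop (𝓝 ((0:ℝ) • (1:A))) :=
          h1.smul_const 1
        rw [zero_smul] at h2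
        exact h2.sub tendsto_const_nhds
      have hmem : ∀ n : ℕ, ((n : ℝ) + 1)⁻¹ • (1:A) - b ∈ {x : A | 0 ≤ x} := by
        intro n
        have := hble ((n : ℝ) + 1)⁻¹ (by positivity)
        simpa using sub_nonneg.mpr this
      have := CStarAlgebra.isClosed_nonneg.mem_of_tendsto htend
        (Eventually.of_forall hmem)
      rw [zero_sub] at this
      exact neg_nonneg.mp this
    have hbz : b = 0 := le_antisymm hb_le0 hb0
    have hnorm : ‖a‖ * ‖a‖ = 0 := by
      rw [← CStarRing.norm_star_mul_self, ← hbdef, hbz, norm_zero]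
    have : ‖a‖ = 0 := by
      rcases mul_self_eq_zero.mp hnorm with h
      exact h
    exact norm_eq_zero.mp this
  intro x y hxy
  have h0 : π (x - y) = 0 := by rw [map_sub, hxy, sub_self]
  have := key _ h0
  exact sub_eq_zero.mp this
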